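/- Let d ∈ (0,2) and set c₁ := d/(20(6−d)). Then there exist a constant C > 0 and N₀ such that for all N ≥ N₀, the number of integers m with 1 ≤ m ≤ N for which there exists a finite simple graph G (not necessarily connected) with average degree at most d and i(G) = m is at least C·N^{c₁}. -/

import Mathlib

/-- The number of independent sets of a simple graph `G`
(including the empty set). -/
noncomputable def numIndep {V : Type*} (G : SimpleGraph V) : ℕ :=
  Nat.card {s : Set V // ∀ x ∈ s, ∀ y ∈ s, ¬ G.Adj x y}

/-- `Iavg d` is the set of positive integers of the form `i(G)` for a finite
simple graph `G` (not necessarily connected) of average degree at most `d`,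
i.e. with `2|E(G)| ≤ d |V(G)|` (the empty graph has average degree `0`). -/
def Iavg (d : ℝ) : Set ℕ :=
  {m | ∃ (n : ℕ) (G : SimpleGraph (Fin n)),
    (2 * Nat.card G.edgeSet : ℝ) ≤ d * n ∧ numIndep G = m}

namespace IavgAux


/-- One layer step on the pair `(A, B)`. -/
def stepP (k : ℕ) (a : Bool) (p : ℕ × ℕ) : ℕ × ℕ :=
  (2 ^ k * (p.1 + p.2), (if a then 1 else 2 ^ k) * p.1)

/-- Fold of the bit-layers over a bit string, base `(1,1)`. -/
def foldB (s : List Bool) : ℕ × ℕ := s.foldr (fun b p => stepP 1 b p) (1, 1)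

lemma foldB_cons (b : Bool) (s : List Bool) : foldB (b :: s) = stepP 1 b (foldB s) := rfl

lemma foldB_good (s : List Bool) : 1 ≤ (foldB s).2 ∧ (foldB s).2 ≤ (foldB s).1 := by
  induction s with
  | nil => exact ⟨le_refl 1, le_refl 1⟩
  | cons b s ih =>
    rcases ih with ⟨h1, h2⟩
    rw [foldB_cons]
    unfold stepP
    cases b <;> simp <;> omega

lemma foldB_bound (s : List Bool) : (foldB s).1 ≤ 2 ^ (2 * s.length) := by
  induction s with
  | nil => simp [foldB]
  | cons b s ih =>
    have hg := foldB_good s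
    rw [foldB_cons]
    unfold stepP
    simp only [List.length_cons, Prod.fst]
    have e1 : 2 * (s.length + 1) = 2 * s.length + 2 := by ring
    rw [e1]
    have e2 : (2:ℕ) ^ (2 * s.length + 2) = 2 ^ (2 * s.length) + 2 ^ (2 * s.length)
        + (2 ^ (2 * s.length) + 2 ^ (2 * s.length)) := by
      rw [pow_add]; ring
    have e3 : (2:ℕ) ^ 1 = 2 := pow_one 2
    rw [e2, e3]
    omega

lemma foldB_inj : ∀ s s' : List Bool, s.length = s'.length →
    foldB s = foldB s' → s = s' := by
  intro s
  induction s with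
  | nil => intro s' h _; cases s' with
    | nil => rfl
    | cons => simp at h
  | cons b s ih =>
    intro s' hlen heq
    cases s' with
    | nil => simp at hlen
    | cons b' s' =>
      simp only [List.length_cons, Nat.add_right_cancel_iff] at hlen
      rw [foldB_cons, foldB_cons] at heq
      unfold stepP at heq
      have h1 := congrArg Prod.fst heq
      have h2 := congrArg Prod.snd heq
      simp only [Prod.fst, Prod.snd, pow_one] at h1 h2
      obtain ⟨g1, g2⟩ := foldB_good s
      obtain ⟨g1', g2'⟩ := foldB_good s'
      have hb : b = b' := by
        cases b <;> cases b' <;> simp at h2 ⊢ <;> omega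
      subst hb
      have hAB : foldB s = foldB s' := by
        have : (foldB s).1 = (foldB s').1 := by cases b <;> simp at h2 <;> omega
        have h2' : (foldB s).2 = (foldB s').2 := by omega
        exact Prod.ext this h2'
      rw [ih s' hlen hAB]

/-- The full pair: bits, then a splitter star layer, then a padding layer. -/
def fullP (s : List Bool) (t : ℕ) : ℕ × ℕ :=
  stepP t false (stepP (2 * s.length + 2) true (foldB s))

/-- The value realized as a number of independent sets. -/
def valN (s : List Bool) (t : ℕ) : ℕ := (fullP s t).1 + (fullP s t).2

lemma valN_eq (s : List Bool) (t : ℕ) :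
    valN s t = 2 ^ t * (2 ^ (2 * s.length + 3) * ((foldB s).1 + (foldB s).2) + (foldB s).1) := by
  unfold valN fullP stepP
  simp only [Prod.fst, Prod.snd, if_true, if_false, Bool.false_eq_true]
  ring

lemma valN_pos (s : List Bool) (t : ℕ) : 1 ≤ valN s t := by
  have hA : 1 ≤ (foldB s).1 := le_trans (foldB_good s).1 (foldB_good s).2
  rw [valN_eq]
  have h1 : 0 < 2 ^ t := Nat.pow_pos (by norm_num)
  have h2 : 0 < 2 ^ (2 * s.length + 3) * ((foldB s).1 + (foldB s).2) + (foldB s).1 := by omega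
  exact Nat.mul_pos h1 h2

lemma valN_le (s : List Bool) (t : ℕ) : valN s t ≤ 2 ^ (t + 4 * s.length + 5) := by
  have h1 := foldB_bound s
  have h2 := (foldB_good s).2
  rw [valN_eq]
  set l := s.length with hl
  have hsum : (foldB s).1 + (foldB s).2 ≤ 2 ^ (2 * l + 1) := by
    have e : (2:ℕ) ^ (2 * l + 1) = 2 ^ (2 * l) + 2 ^ (2 * l) := by rw [pow_add]; ring
    omega
  have k1 : 2 ^ (2 * l + 3) * ((foldB s).1 + (foldB s).2) ≤ 2 ^ (2 * l + 3) * 2 ^ (2 * l + 1) :=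
    Nat.mul_le_mul_left _ hsum
  have k2 : (2:ℕ) ^ (2 * l + 3) * 2 ^ (2 * l + 1) = 2 ^ (4 * l + 4) := by
    rw [← pow_add]; congr 1; ring
  have k3 : (2:ℕ) ^ (2 * l) ≤ 2 ^ (4 * l + 4) := Nat.pow_le_pow_right (by norm_num) (by omega)
  have k4 : (2:ℕ) ^ (4 * l + 5) = 2 ^ (4 * l + 4) + 2 ^ (4 * l + 4) := by rw [pow_add]; ring
  have k5 : 2 ^ (2 * l + 3) * ((foldB s).1 + (foldB s).2) + (foldB s).1 ≤ 2 ^ (4 * l + 5) := by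
    omega
  calc 2 ^ t * (2 ^ (2 * l + 3) * ((foldB s).1 + (foldB s).2) + (foldB s).1)
      ≤ 2 ^ t * 2 ^ (4 * l + 5) := Nat.mul_le_mul_left _ k5
    _ = 2 ^ (t + 4 * l + 5) := by rw [← pow_add, ← Nat.add_assoc]

lemma valN_inj (t : ℕ) (s s' : List Bool) (hlen : s.length = s'.length)
    (h : valN s t = valN s' t) : s = s' := by
  rw [valN_eq, valN_eq, hlen] at h
  set L := 2 * s'.length + 3 with hL
  have hx : 2 ^ L * ((foldB s).1 + (foldB s).2) + (foldB s).1
      = 2 ^ L * ((foldB s').1 + (foldB s').2) + (foldB s').1 :=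
    Nat.eq_of_mul_eq_mul_left (Nat.pow_pos (by norm_num)) h
  have hb : (foldB s).1 < 2 ^ L := by
    calc (foldB s).1 ≤ 2 ^ (2 * s.length) := foldB_bound s
      _ < 2 ^ L := by rw [hlen]; exact Nat.pow_lt_pow_right (by norm_num) (by omega)
  have hb' : (foldB s').1 < 2 ^ L := by
    calc (foldB s').1 ≤ 2 ^ (2 * s'.length) := foldB_bound s'
      _ < 2 ^ L := Nat.pow_lt_pow_right (by norm_num) (by omega)
  have hmod := congrArg (· % 2 ^ L) hx
  simp only [Nat.mul_add_mod] at hmod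
  rw [Nat.mod_eq_of_lt hb, Nat.mod_eq_of_lt hb'] at hmod
  have hdiv := congrArg (· / 2 ^ L) hx
  have hp : 0 < 2 ^ L := Nat.pow_pos (by norm_num)
  simp only [Nat.mul_add_div hp] at hdiv
  rw [Nat.div_eq_of_lt hb, Nat.div_eq_of_lt hb'] at hdiv
  apply foldB_inj s s' hlen
  have h2 : (foldB s).2 = (foldB s').2 := by omega
  exact Prod.ext hmod h2


/-- Independence predicate (matching `numIndep`). -/
def IndP {V : Type*} (G : SimpleGraph V) (s : Set V) : Prop :=
  ∀ x ∈ s, ∀ y ∈ s, ¬ G.Adj x y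

noncomputable def cA {V : Type*} (G : SimpleGraph V) (z : V) : ℕ :=
  Nat.card {s : Set V // IndP G s ∧ z ∉ s}

noncomputable def cB {V : Type*} (G : SimpleGraph V) (z : V) : ℕ :=
  Nat.card {s : Set V // IndP G s ∧ z ∈ s}

lemma card_split {α : Type*} [Finite α] (p q : α → Prop) :
    Nat.card {x // p x} = Nat.card {x // p x ∧ q x} + Nat.card {x // p x ∧ ¬ q x} := by
  classical
  have e1 : {x : {y // p y} // q x.val} ≃ {x // p x ∧ q x} :=
    Equiv.subtypeSubtypeEquivSubtypeInter p q
  have e2 : {x : {y // p y} // ¬ q x.val} ≃ {x // p x ∧ ¬ q x} :=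
    Equiv.subtypeSubtypeEquivSubtypeInter p (fun x => ¬ q x)
  have e3 : {x : {y // p y} // q x.val} ⊕ {x : {y // p y} // ¬ q x.val} ≃ {y // p y} :=
    Equiv.sumCompl _
  rw [← Nat.card_congr e1, ← Nat.card_congr e2, ← Nat.card_sum, Nat.card_congr e3]

lemma numIndep_split {V : Type*} [Finite V] (G : SimpleGraph V) (z : V) :
    numIndep G = cB G z + cA G z := by
  have : numIndep G = Nat.card {s : Set V // IndP G s} := rfl
  rw [this, card_split (IndP G) (fun s => z ∈ s)]
  rfl

lemma card_set_fin (k : ℕ) : Nat.card (Set (Fin k)) = 2 ^ k := by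
  have e : Set (Fin k) ≃ (Fin k → Bool) :=
    Equiv.arrowCongr (Equiv.refl (Fin k)) Equiv.propEquivBool
  rw [Nat.card_congr e, Nat.card_fun]
  simp [Nat.card_eq_fintype_card]

/-- Add one layer: a new spine vertex (adjacent to the old distinguished vertex `z`),
together with `k` companion vertices which are adjacent to the new spine vertex if
`a = true` and isolated if `a = false`. -/
def layer (k : ℕ) (a : Bool) {V : Type*} (G : SimpleGraph V) (z : V) :
    SimpleGraph ((Unit ⊕ Fin k) ⊕ V) where
  Adj x y := match x, y with
    | Sum.inl (Sum.inl _), Sum.inl (Sum.inr _) => a = true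
    | Sum.inl (Sum.inr _), Sum.inl (Sum.inl _) => a = true
    | Sum.inl (Sum.inl _), Sum.inr v => v = z
    | Sum.inr v, Sum.inl (Sum.inl _) => v = z
    | Sum.inr u, Sum.inr v => G.Adj u v
    | _, _ => False
  symm := by
    constructor
    rintro ((⟨⟩ | j) | u) ((⟨⟩ | j') | u') h
    all_goals first | exact h | exact G.symm.symm _ _ h
  loopless := by
    constructor
    rintro ((⟨⟩ | j) | u) h
    · exact h
    · exact h
    · exact G.loopless.irrefl u h

variable {V : Type*} (G : SimpleGraph V) (z : V) (k : ℕ) (a : Bool)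

/-- Decoding a set for the `z' ∉ S` case. -/
def decA (T : Set V) (c : Set (Fin k)) : Set ((Unit ⊕ Fin k) ⊕ V) := fun w =>
  match w with
  | Sum.inl (Sum.inl _) => False
  | Sum.inl (Sum.inr j) => j ∈ c
  | Sum.inr v => v ∈ T

lemma indP_preimage {S : Set ((Unit ⊕ Fin k) ⊕ V)} (hS : IndP (layer k a G z) S) :
    IndP G (Sum.inr ⁻¹' S) := fun u hu v hv hadj => hS _ hu _ hv hadj

lemma cA_layer [Finite V] :
    cA (layer k a G z) (Sum.inl (Sum.inl ())) = 2 ^ k * (cA G z + cB G z) := by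
  classical
  have E : {s : Set ((Unit ⊕ Fin k) ⊕ V) //
        IndP (layer k a G z) s ∧ (Sum.inl (Sum.inl ()) : (Unit ⊕ Fin k) ⊕ V) ∉ s}
      ≃ {T : Set V // IndP G T} × Set (Fin k) := by
    refine ⟨fun S => (⟨Sum.inr ⁻¹' S.val, indP_preimage G z k a S.prop.1⟩,
        {j | Sum.inl (Sum.inr j) ∈ S.val}), fun P => ⟨decA k P.1.val P.2, ?_, ?_⟩, ?_, ?_⟩
    · intro x hx y hy hadj
      rcases x with ((⟨⟩ | j) | u) <;> rcases y with ((⟨⟩ | j') | u')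
      · exact hx
      · exact hx
      · exact hx
      · exact hy
      · exact hadj
      · exact hadj
      · exact hy
      · exact hadj
      · exact P.1.prop u hx u' hy hadj
    · exact fun h => h
    · rintro ⟨S, hS, hz⟩
      apply Subtype.ext
      apply Set.ext
      rintro ((⟨⟩ | j) | u)
      · exact ⟨fun h => False.elim h, fun h => hz h⟩
      · exact Iff.rfl
      · exact Iff.rfl
    · rintro ⟨⟨T, hT⟩, c⟩
      rfl
  rw [cA, Nat.card_congr E, Nat.card_prod, card_set_fin, Nat.mul_comm]
  congr 1
  rw [card_split (IndP G) (fun s => z ∈ s)]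
  have h1 : cA G z = Nat.card {s : Set V // IndP G s ∧ ¬ z ∈ s} := rfl
  have h2 : cB G z = Nat.card {s : Set V // IndP G s ∧ z ∈ s} := rfl
  omega

/-- Decoding a set for the `z' ∈ S` case, `a = true`. -/
def decBT (T : Set V) : Set ((Unit ⊕ Fin k) ⊕ V) := fun w =>
  match w with
  | Sum.inl (Sum.inl _) => True
  | Sum.inl (Sum.inr _) => False
  | Sum.inr v => v ∈ T

lemma cB_layer_true [Finite V] :
    cB (layer k true G z) (Sum.inl (Sum.inl ())) = cA G z := by
  classical
  have E : {s : Set ((Unit ⊕ Fin k) ⊕ V) //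
        IndP (layer k true G z) s ∧ (Sum.inl (Sum.inl ()) : (Unit ⊕ Fin k) ⊕ V) ∈ s}
      ≃ {T : Set V // IndP G T ∧ z ∉ T} := by
    refine ⟨fun S => ⟨Sum.inr ⁻¹' S.val, indP_preimage G z k true S.prop.1, fun hz =>
        S.prop.1 _ S.prop.2 _ hz rfl⟩,
      fun T => ⟨decBT k T.val, ?_, trivial⟩, ?_, ?_⟩
    · intro x hx y hy hadj
      rcases x with ((⟨⟩ | j) | u) <;> rcases y with ((⟨⟩ | j') | u')
      · exact hadj
      · exact hy
      · exact T.prop.2 ((show u' = z from hadj) ▸ hy)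
      · exact hx
      · exact hx
      · exact hx
      · exact T.prop.2 ((show u = z from hadj) ▸ hx)
      · exact hy
      · exact T.prop.1 u hx u' hy hadj
    · rintro ⟨S, hS, hz⟩
      apply Subtype.ext
      apply Set.ext
      rintro ((⟨⟩ | j) | u)
      · exact ⟨fun _ => hz, fun _ => trivial⟩
      · exact ⟨fun h => False.elim h, fun h => (hS _ hz _ h rfl).elim⟩
      · exact Iff.rfl
    · rintro ⟨T, hT, hz⟩
      rfl
  rw [cB, Nat.card_congr E]
  rfl

/-- Decoding a set for the `z' ∈ S` case, `a = false`. -/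
def decBF (T : Set V) (c : Set (Fin k)) : Set ((Unit ⊕ Fin k) ⊕ V) := fun w =>
  match w with
  | Sum.inl (Sum.inl _) => True
  | Sum.inl (Sum.inr j) => j ∈ c
  | Sum.inr v => v ∈ T

lemma cB_layer_false [Finite V] :
    cB (layer k false G z) (Sum.inl (Sum.inl ())) = 2 ^ k * cA G z := by
  classical
  have E : {s : Set ((Unit ⊕ Fin k) ⊕ V) //
        IndP (layer k false G z) s ∧ (Sum.inl (Sum.inl ()) : (Unit ⊕ Fin k) ⊕ V) ∈ s}
      ≃ {T : Set V // IndP G T ∧ z ∉ T} × Set (Fin k) := by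
    refine ⟨fun S => (⟨Sum.inr ⁻¹' S.val, indP_preimage G z k false S.prop.1, fun hz =>
        S.prop.1 _ S.prop.2 _ hz rfl⟩, {j | Sum.inl (Sum.inr j) ∈ S.val}),
      fun P => ⟨decBF k P.1.val P.2, ?_, trivial⟩, ?_, ?_⟩
    · intro x hx y hy hadj
      rcases x with ((⟨⟩ | j) | u) <;> rcases y with ((⟨⟩ | j') | u')
      · exact hadj
      · exact Bool.noConfusion (show false = true from hadj)
      · exact P.1.prop.2 ((show u' = z from hadj) ▸ hy)
      · exact Bool.noConfusion (show false = true from hadj)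
      · exact hadj
      · exact hadj
      · exact P.1.prop.2 ((show u = z from hadj) ▸ hx)
      · exact hadj
      · exact P.1.prop.1 u hx u' hy hadj
    · rintro ⟨S, hS, hz⟩
      apply Subtype.ext
      apply Set.ext
      rintro ((⟨⟩ | j) | u)
      · exact ⟨fun _ => hz, fun _ => trivial⟩
      · exact Iff.rfl
      · exact Iff.rfl
    · rintro ⟨⟨T, hT, hz⟩, c⟩
      rfl
  rw [cB, Nat.card_congr E, Nat.card_prod, card_set_fin, Nat.mul_comm]
  rfl

/-- The recursive vertex type for a list of layers. -/
def Vt : List (ℕ × Bool) → Type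
  | [] => Unit
  | p :: l => (Unit ⊕ Fin p.1) ⊕ Vt l

instance VtFintype : ∀ l, Fintype (Vt l)
  | [] => inferInstanceAs (Fintype Unit)
  | p :: l => letI := VtFintype l; inferInstanceAs (Fintype ((Unit ⊕ Fin p.1) ⊕ Vt l))

instance VtFinite (l : List (ℕ × Bool)) : Finite (Vt l) := Finite.of_fintype _

/-- The distinguished (newest spine) vertex. -/
def hd : ∀ l : List (ℕ × Bool), Vt l
  | [] => ()
  | _ :: _ => Sum.inl (Sum.inl ())

/-- The caterpillar-type graph associated to a list of layers. -/
def Gr : ∀ l : List (ℕ × Bool), SimpleGraph (Vt l)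
  | [] => ⊥
  | p :: l => layer p.1 p.2 (Gr l) (hd l)

lemma cA_nil : cA (Gr []) (hd []) = 1 := by
  rw [cA, Nat.card_eq_one_iff_unique]
  constructor
  · constructor
    rintro ⟨s, hs, hzs⟩ ⟨s', hs', hzs'⟩
    apply Subtype.ext
    apply Set.ext
    rintro ⟨⟩
    exact ⟨fun h => absurd h hzs, fun h => absurd h hzs'⟩
  · exact ⟨⟨∅, fun x hx => absurd hx (Set.notMem_empty x), Set.notMem_empty _⟩⟩

lemma cB_nil : cB (Gr []) (hd []) = 1 := by
  rw [cB, Nat.card_eq_one_iff_unique]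
  constructor
  · constructor
    rintro ⟨s, hs, hzs⟩ ⟨s', hs', hzs'⟩
    apply Subtype.ext
    apply Set.ext
    rintro ⟨⟩
    exact ⟨fun _ => hzs', fun _ => hzs⟩
  · exact ⟨⟨Set.univ, fun x _ y _ h => h, trivial⟩⟩

/-- The two counts of the caterpillar graph are computed by `stepP`. -/
lemma Gr_count : ∀ l : List (ℕ × Bool),
    cA (Gr l) (hd l) = (l.foldr (fun p q => stepP p.1 p.2 q) (1, 1)).1 ∧
    cB (Gr l) (hd l) = (l.foldr (fun p q => stepP p.1 p.2 q) (1, 1)).2 := by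
  intro l
  induction l with
  | nil => exact ⟨cA_nil, cB_nil⟩
  | cons p l ih =>
    rcases p with ⟨k, a⟩
    rcases ih with ⟨ihA, ihB⟩
    constructor
    · have h := cA_layer (Gr l) (hd l) k a
      rw [show Gr ((k, a) :: l) = layer k a (Gr l) (hd l) from rfl,
        show hd ((k, a) :: l) = (Sum.inl (Sum.inl ()) : Vt ((k, a) :: l)) from rfl]
      refine h.trans ?_; rw [ihA, ihB]
      rfl
    · rw [show Gr ((k, a) :: l) = layer k a (Gr l) (hd l) from rfl,
        show hd ((k, a) :: l) = (Sum.inl (Sum.inl ()) : Vt ((k, a) :: l)) from rfl]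
      cases a
      · refine (cB_layer_false (Gr l) (hd l) k).trans ?_; rw [ihA]
        simp [stepP]
      · refine (cB_layer_true (Gr l) (hd l) k).trans ?_; rw [ihA]
        simp [stepP]

lemma numIndep_Gr (l : List (ℕ × Bool)) :
    numIndep (Gr l) = (l.foldr (fun p q => stepP p.1 p.2 q) (1, 1)).1
      + (l.foldr (fun p q => stepP p.1 p.2 q) (1, 1)).2 := by
  rw [numIndep_split (Gr l) (hd l), (Gr_count l).1, (Gr_count l).2, Nat.add_comm]
/-- Map used to bound the number of neighbors of the new spine vertex. -/
def nbMap {V : Type*} (k : ℕ) : (Unit ⊕ Fin k) ⊕ V → Unit ⊕ Fin k := fun w =>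
  match w with
  | Sum.inl (Sum.inl _) => Sum.inl ()
  | Sum.inl (Sum.inr j) => Sum.inr j
  | Sum.inr _ => Sum.inl ()

lemma neighbor_card_layer {V : Type*} (G : SimpleGraph V) (z : V) (k : ℕ) (a : Bool) :
    Nat.card ((layer k a G z).neighborSet (Sum.inl (Sum.inl ())))
      ≤ 1 + (if a then k else 0) := by
  classical
  cases a
  · -- a = false : at most the old head is a neighbor
    have hinj : Function.Injective
        (fun w : (layer k false G z).neighborSet (Sum.inl (Sum.inl ())) => (() : Unit)) := by
      rintro ⟨((⟨⟩ | j) | u), hw⟩ ⟨((⟨⟩ | j') | u'), hw'⟩ _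
      · exact absurd hw (fun h => h)
      · exact absurd hw (fun h => h)
      · exact absurd hw (fun h => h)
      · exact absurd hw (fun h => Bool.noConfusion (show false = true from h))
      · exact absurd hw (fun h => Bool.noConfusion (show false = true from h))
      · exact absurd hw (fun h => Bool.noConfusion (show false = true from h))
      · exact absurd hw' (fun h => h)
      · exact absurd hw' (fun h => Bool.noConfusion (show false = true from h))
      · have h1 : u = z := hw
        have h2 : u' = z := hw'
        apply Subtype.ext
        show Sum.inr u = Sum.inr u'
        rw [h1, h2]
    calc Nat.card ((layer k false G z).neighborSet (Sum.inl (Sum.inl ())))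
        ≤ Nat.card Unit := Nat.card_le_card_of_injective _ hinj
      _ = 1 := Nat.card_unique
      _ ≤ _ := by simp
  · -- a = true : neighbors are the old head and the k companions
    have hinj : Function.Injective
        (fun w : (layer k true G z).neighborSet (Sum.inl (Sum.inl ())) => nbMap k w.val) := by
      rintro ⟨((⟨⟩ | j) | u), hw⟩ ⟨((⟨⟩ | j') | u'), hw'⟩ h
      · exact absurd hw (fun h => h)
      · exact absurd hw (fun h => h)
      · exact absurd hw (fun h => h)
      · exact absurd hw' (fun h => h)
      · simp only [nbMap, Sum.inr.injEq] at h
        apply Subtype.ext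
        rw [h]
      · exact absurd h (by simp [nbMap])
      · exact absurd hw' (fun h => h)
      · exact absurd h (by simp [nbMap])
      · have h1 : u = z := hw
        have h2 : u' = z := hw'
        apply Subtype.ext
        show Sum.inr u = Sum.inr u'
        rw [h1, h2]
    calc Nat.card ((layer k true G z).neighborSet (Sum.inl (Sum.inl ())))
        ≤ Nat.card (Unit ⊕ Fin k) := Nat.card_le_card_of_injective _ hinj
      _ = 1 + k := by
          rw [Nat.card_sum, Nat.card_unique, Nat.card_eq_fintype_card, Fintype.card_fin]
      _ ≤ _ := by simp

lemma edge_layer {V : Type*} [Finite V] (G : SimpleGraph V) (z : V) (k : ℕ) (a : Bool) :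
    ((layer k a G z).edgeSet).ncard ≤ (1 + (if a then k else 0)) + (G.edgeSet).ncard := by
  classical
  set L := layer k a G z with hL
  set z' : (Unit ⊕ Fin k) ⊕ V := Sum.inl (Sum.inl ()) with hz'
  have hsub : L.edgeSet ⊆ (Sym2.map Sum.inr '' G.edgeSet) ∪ L.incidenceSet z' := by
    intro e he
    revert he
    refine Sym2.ind ?_ e
    intro x y he
    rw [SimpleGraph.mem_edgeSet] at he
    have hmem : s(x, y) ∈ L.edgeSet := L.mem_edgeSet.mpr he
    rcases x with ((⟨⟩ | j) | u) <;> rcases y with ((⟨⟩ | j') | u')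
    · exact absurd he (fun h => h)
    · exact Or.inr ⟨hmem, Sym2.mem_mk_left _ _⟩
    · exact Or.inr ⟨hmem, Sym2.mem_mk_left _ _⟩
    · exact Or.inr ⟨hmem, Sym2.mem_mk_right _ _⟩
    · exact absurd he (fun h => h)
    · exact absurd he (fun h => h)
    · exact Or.inr ⟨hmem, Sym2.mem_mk_right _ _⟩
    · exact absurd he (fun h => h)
    · exact Or.inl ⟨s(u, u'), G.mem_edgeSet.mpr he, Sym2.map_pair_eq _ _ _⟩
  have hcard : (L.incidenceSet z').ncard ≤ 1 + (if a then k else 0) := by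
    rw [← Nat.card_coe_set_eq]
    calc Nat.card (L.incidenceSet z')
        = Nat.card (L.neighborSet z') := Nat.card_congr (L.incidenceSetEquivNeighborSet z')
      _ ≤ 1 + (if a then k else 0) := neighbor_card_layer G z k a
  calc (L.edgeSet).ncard ≤ ((Sym2.map Sum.inr '' G.edgeSet) ∪ L.incidenceSet z').ncard :=
        Set.ncard_le_ncard hsub (Set.toFinite _)
    _ ≤ (Sym2.map Sum.inr '' G.edgeSet).ncard + (L.incidenceSet z').ncard :=
        Set.ncard_union_le _ _
    _ ≤ (G.edgeSet).ncard + (1 + (if a then k else 0)) :=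
        Nat.add_le_add (Set.ncard_image_le (Set.toFinite _)) hcard
    _ = (1 + (if a then k else 0)) + (G.edgeSet).ncard := Nat.add_comm _ _

lemma edge_Gr : ∀ l : List (ℕ × Bool),
    ((Gr l).edgeSet).ncard ≤ l.foldr (fun p n => (1 + (if p.2 then p.1 else 0)) + n) 0 := by
  intro l
  induction l with
  | nil =>
    have : (Gr []).edgeSet = ∅ := SimpleGraph.edgeSet_bot
    rw [this]
    simp
  | cons p l ih =>
    rcases p with ⟨k, a⟩
    calc ((Gr ((k, a) :: l)).edgeSet).ncard
        ≤ (1 + (if a then k else 0)) + ((Gr l).edgeSet).ncard :=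
          edge_layer (Gr l) (hd l) k a
      _ ≤ (1 + (if a then k else 0)) + l.foldr (fun p n => (1 + (if p.2 then p.1 else 0)) + n) 0 :=
          Nat.add_le_add_left ih _
      _ = _ := rfl

lemma card_Vt : ∀ l : List (ℕ × Bool),
    Nat.card (Vt l) = l.foldr (fun p n => 1 + p.1 + n) 1 := by
  intro l
  induction l with
  | nil =>
    show Nat.card Unit = 1
    exact Nat.card_unique
  | cons p l ih =>
    rcases p with ⟨k, a⟩
    have : Nat.card (Vt ((k, a) :: l)) = Nat.card (Unit ⊕ Fin k) + Nat.card (Vt l) :=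
      Nat.card_sum
    rw [this, ih, Nat.card_sum, Nat.card_unique, Nat.card_eq_fintype_card, Fintype.card_fin]
    rfl

lemma numIndep_iso {V W : Type*} {G : SimpleGraph V} {G' : SimpleGraph W} (f : G ≃g G') :
    numIndep G = numIndep G' := by
  apply Nat.card_congr
  refine Equiv.subtypeEquiv (Equiv.Set.congr f.toEquiv) ?_
  intro s
  constructor
  · intro h x hx y hy hadj
    obtain ⟨x₀, hx₀, rfl⟩ := hx
    obtain ⟨y₀, hy₀, rfl⟩ := hy
    exact h x₀ hx₀ y₀ hy₀ (f.map_adj_iff.mp hadj)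
  · intro h x hx y hy hadj
    exact h (f x) ⟨x, hx, rfl⟩ (f y) ⟨y, hy, rfl⟩ (f.map_adj_iff.mpr hadj)

lemma edgeCard_iso {V W : Type*} {G : SimpleGraph V} {G' : SimpleGraph W} (f : G ≃g G') :
    Nat.card G.edgeSet = Nat.card G'.edgeSet :=
  Nat.card_congr f.mapEdgeSet
/-- The configuration list: padding layer, splitter layer, then the bit layers. -/
def confL (s : List Bool) (t : ℕ) : List (ℕ × Bool) :=
  (t, false) :: (2 * s.length + 2, true) :: s.map (fun b => (1, b))

lemma map_fold (s : List Bool) :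
    (s.map fun b => ((1 : ℕ), b)).foldr (fun p q => stepP p.1 p.2 q) (1, 1) = foldB s := by
  induction s with
  | nil => rfl
  | cons b s ih => simp only [List.map_cons, List.foldr_cons, ih, foldB_cons]

lemma fold_conf (s : List Bool) (t : ℕ) :
    (confL s t).foldr (fun p q => stepP p.1 p.2 q) (1, 1) = fullP s t := by
  show stepP t false (stepP (2 * s.length + 2) true
      ((s.map fun b => ((1 : ℕ), b)).foldr (fun p q => stepP p.1 p.2 q) (1, 1))) = _
  rw [map_fold]
  rfl

lemma numIndep_conf (s : List Bool) (t : ℕ) : numIndep (Gr (confL s t)) = valN s t := by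
  rw [numIndep_Gr, fold_conf]
  rfl

lemma map_fold_card (s : List Bool) :
    (s.map fun b => ((1 : ℕ), b)).foldr (fun p n => 1 + p.1 + n) 1 = 2 * s.length + 1 := by
  induction s with
  | nil => rfl
  | cons b s ih =>
    simp only [List.map_cons, List.foldr_cons, ih, List.length_cons]
    ring

lemma card_Vt_conf (s : List Bool) (t : ℕ) :
    Nat.card (Vt (confL s t)) = t + 4 * s.length + 5 := by
  rw [card_Vt]
  show 1 + t + (1 + (2 * s.length + 2) +
    (s.map fun b => ((1 : ℕ), b)).foldr (fun p n => 1 + p.1 + n) 1) = _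
  rw [map_fold_card]
  ring

lemma map_fold_cost (s : List Bool) :
    (s.map fun b => ((1 : ℕ), b)).foldr (fun p n => (1 + (if p.2 then p.1 else 0)) + n) 0
      ≤ 2 * s.length := by
  induction s with
  | nil => simp
  | cons b s ih =>
    simp only [List.map_cons, List.foldr_cons, List.length_cons]
    have : (1 + (if b then 1 else 0)) ≤ 2 := by cases b <;> simp
    omega

lemma edge_conf (s : List Bool) (t : ℕ) :
    ((Gr (confL s t)).edgeSet).ncard ≤ 4 * s.length + 4 := by
  calc ((Gr (confL s t)).edgeSet).ncard
      ≤ (confL s t).foldr (fun p n => (1 + (if p.2 then p.1 else 0)) + n) 0 :=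
        edge_Gr (confL s t)
    _ = (1 + 0) + ((1 + (2 * s.length + 2)) +
        (s.map fun b => ((1 : ℕ), b)).foldr (fun p n => (1 + (if p.2 then p.1 else 0)) + n) 0) :=
        rfl
    _ ≤ 4 * s.length + 4 := by
        have := map_fold_cost s
        omega

/-- The realized values belong to `Iavg d`. -/
lemma valN_mem_Iavg (d : ℝ) (s : List Bool) (t : ℕ)
    (hcond : (2 * (4 * s.length + 4 : ℕ) : ℝ) ≤ d * ((t + 4 * s.length + 5 : ℕ) : ℝ)) :
    valN s t ∈ Iavg d := by
  classical
  set l := confL s t with hl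
  set e := Fintype.equivFin (Vt l) with he
  refine ⟨Fintype.card (Vt l), (Gr l).map e.toEmbedding, ?_, ?_⟩
  · have h1 : Nat.card ((Gr l).map e.toEmbedding).edgeSet = Nat.card (Gr l).edgeSet :=
      (edgeCard_iso (SimpleGraph.Iso.map e (Gr l))).symm
    have h2 : Nat.card (Gr l).edgeSet ≤ 4 * s.length + 4 := by
      rw [Nat.card_coe_set_eq]
      exact edge_conf s t
    have h3 : (Fintype.card (Vt l) : ℝ) = ((t + 4 * s.length + 5 : ℕ) : ℝ) := by
      rw [← Nat.card_eq_fintype_card, card_Vt_conf]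
    rw [h3]
    calc (2 * Nat.card ((Gr l).map e.toEmbedding).edgeSet : ℝ)
        ≤ (2 * (4 * s.length + 4 : ℕ) : ℝ) := by
          rw [h1]
          have h4 : (Nat.card (Gr l).edgeSet : ℝ) ≤ ((4 * s.length + 4 : ℕ) : ℝ) := by
            exact_mod_cast h2
          push_cast at h4 ⊢
          linarith
      _ ≤ d * ((t + 4 * s.length + 5 : ℕ) : ℝ) := hcond
  · exact (numIndep_iso (SimpleGraph.Iso.map e (Gr l))).symm.trans (numIndep_conf s t)
end IavgAux

set_option maxHeartbeats 2000000 in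
open IavgAux in
/-- For `d ∈ (0,2)` and `c₁ = d/(20(6-d))`, there are `C > 0` and `N₀` with:
for all `N ≥ N₀`, at least `C ⬝ N^{c₁}` integers in `{1,…,N}` are the number of
independent sets of a graph with average degree at most `d`. -/
theorem Iavg_lower_bound (d : ℝ) (hd : d ∈ Set.Ioo (0 : ℝ) 2) :
    ∃ C : ℝ, 0 < C ∧ ∃ N₀ : ℕ, ∀ N : ℕ, N₀ ≤ N →
      C * (N : ℝ) ^ (d / (20 * (6 - d))) ≤ ((Iavg d ∩ Set.Icc 1 N).ncard : ℝ) := by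
  classical
  obtain ⟨hd0, hd2⟩ := hd
  refine ⟨1/4, by norm_num, 2 ^ (⌈(30/14 : ℝ) * (6 + 8/d)⌉₊), ?_⟩
  intro N hN
  set P := Nat.log 2 N with hP
  have hN1 : 1 ≤ N := by
    have : 0 < 2 ^ (⌈(30/14 : ℝ) * (6 + 8/d)⌉₊) := Nat.pow_pos (by norm_num)
    omega
  have hPbig : ((30 : ℝ)/14) * (6 + 8/d) ≤ (P : ℝ) := by
    have h1 : ⌈(30/14 : ℝ) * (6 + 8/d)⌉₊ ≤ P := by
      calc ⌈(30/14 : ℝ) * (6 + 8/d)⌉₊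
          = Nat.log 2 (2 ^ ⌈(30/14 : ℝ) * (6 + 8/d)⌉₊) := (Nat.log_pow (by norm_num) _).symm
        _ ≤ Nat.log 2 N := Nat.log_mono_right hN
    calc (30/14 : ℝ) * (6 + 8/d) ≤ (⌈(30/14 : ℝ) * (6 + 8/d)⌉₊ : ℝ) := Nat.le_ceil _
      _ ≤ (P : ℝ) := by exact_mod_cast h1
  set q := ⌊d * P / 30⌋₊ with hq
  set t := ⌈(8 * q + 8 : ℝ) / d⌉₊ with ht
  have hdP : (0 : ℝ) ≤ d * P := mul_nonneg hd0.le (Nat.cast_nonneg P)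
  have hq1 : (q : ℝ) ≤ d * P / 30 := Nat.floor_le (by positivity)
  have hq2 : d * P / 30 < q + 1 := Nat.lt_floor_add_one _
  have ht1 : (8 * q + 8 : ℝ) / d ≤ t := Nat.le_ceil _
  have ht2 : (t : ℝ) < (8 * q + 8 : ℝ) / d + 1 :=
    Nat.ceil_lt_add_one (div_nonneg (by positivity) hd0.le)
  -- the size-fits condition : t + 4q + 5 ≤ P
  have ht2' : (t : ℝ) * d < (8 * q + 8) + d := by
    calc (t : ℝ) * d < ((8 * q + 8 : ℝ) / d + 1) * d := mul_lt_mul_of_pos_right ht2 hd0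
      _ = (8 * q + 8) + d := by field_simp
  have hq1' : 30 * (q : ℝ) ≤ d * P := by linarith
  have hdq : d * q ≤ 2 * (d * P) / 30 := by
    nlinarith [mul_le_mul_of_nonneg_left hq1 hd0.le]
  have hPd : 30 * (6 * d + 8) ≤ 14 * (d * P) := by
    have h := mul_le_mul_of_nonneg_right hPbig hd0.le
    have he : (30/14 : ℝ) * (6 + 8/d) * d = (30/14) * (6 * d + 8) := by
      field_simp
    rw [he] at h
    nlinarith [h]
  have hgd : d * ((t : ℝ) + 4 * q + 5) ≤ d * P := by nlinarith
  have hrr : ((t : ℝ) + 4 * q + 5) ≤ (P : ℝ) := le_of_mul_le_mul_left hgd hd0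
  have hsize : t + 4 * q + 5 ≤ P := by exact_mod_cast hrr
  -- the average-degree condition
  have hcond : (2 * (4 * q + 4 : ℕ) : ℝ) ≤ d * ((t + 4 * q + 5 : ℕ) : ℝ) := by
    push_cast
    have h8 : (8 * q + 8 : ℝ) ≤ d * t := by
      have h := mul_le_mul_of_nonneg_left ht1 hd0.le
      have he : d * ((8 * q + 8 : ℝ) / d) = 8 * q + 8 := by field_simp
      rwa [he] at h
    nlinarith [mul_nonneg hd0.le (by positivity : (0 : ℝ) ≤ 4 * (q : ℝ) + 5)]
  -- the family of realized values
  have hinj : Function.Injective (fun f : Fin q → Bool => valN (List.ofFn f) t) := by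
    intro f g hfg
    have hlen : (List.ofFn f).length = (List.ofFn g).length := by simp
    have h2 := valN_inj t _ _ hlen hfg
    exact List.ofFn_injective h2
  set F : Finset ℕ := Finset.image (fun f : Fin q → Bool => valN (List.ofFn f) t)
    Finset.univ with hF
  have hcard : F.card = 2 ^ q := by
    rw [hF, Finset.card_image_of_injective _ hinj, Finset.card_univ]
    simp
  have hsub : ↑F ⊆ Iavg d ∩ Set.Icc 1 N := by
    intro m hm
    obtain ⟨f, _, rfl⟩ := Finset.mem_image.mp (Finset.mem_coe.mp hm)
    refine ⟨?_, ?_, ?_⟩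
    · refine valN_mem_Iavg d _ t ?_
      rw [List.length_ofFn]
      exact hcond
    · exact valN_pos _ t
    · calc valN (List.ofFn f) t ≤ 2 ^ (t + 4 * (List.ofFn f).length + 5) := valN_le _ t
        _ = 2 ^ (t + 4 * q + 5) := by rw [List.length_ofFn]
        _ ≤ 2 ^ P := Nat.pow_le_pow_right (by norm_num) hsize
        _ ≤ N := Nat.pow_log_le_self 2 (by omega)
  have hfin : (Iavg d ∩ Set.Icc 1 N).Finite :=
    Set.Finite.inter_of_right (Set.finite_Icc 1 N) _
  have hnc : (2 : ℕ) ^ q ≤ (Iavg d ∩ Set.Icc 1 N).ncard := by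
    calc (2 : ℕ) ^ q = F.card := hcard.symm
      _ = (↑F : Set ℕ).ncard := (Set.ncard_coe_finset F).symm
      _ ≤ _ := Set.ncard_le_ncard hsub hfin
  -- the real-number chain
  have hNreal : (1 : ℝ) ≤ (N : ℝ) := by exact_mod_cast hN1
  have hexp : d / (20 * (6 - d)) ≤ d / 30 := by
    apply div_le_div_of_nonneg_left hd0.le (by norm_num)
    nlinarith
  have h1 : (N : ℝ) ^ (d / (20 * (6 - d))) ≤ (N : ℝ) ^ (d / 30) :=
    Real.rpow_le_rpow_of_exponent_le hNreal hexp
  have hNlt : (N : ℝ) ≤ (2 : ℝ) ^ (P + 1) := by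
    exact_mod_cast (Nat.lt_pow_succ_log_self (by norm_num) N).le
  have h2 : (N : ℝ) ^ (d / 30) ≤ ((2 : ℝ) ^ (P + 1)) ^ (d / 30) :=
    Real.rpow_le_rpow (by positivity) hNlt (by positivity)
  have h3 : ((2 : ℝ) ^ (P + 1)) ^ (d / 30) ≤ (2 : ℝ) ^ (q + 2) := by
    rw [← Real.rpow_natCast 2 (P + 1), ← Real.rpow_mul (by norm_num),
      ← Real.rpow_natCast 2 (q + 2)]
    apply Real.rpow_le_rpow_of_exponent_le (by norm_num)
    push_cast
    have hle : d / 30 ≤ 1 := by nlinarith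
    have hd30 : 0 ≤ d / 30 := by positivity
    nlinarith
  have h4 : ((2 : ℝ) ^ (q + 2)) = 4 * 2 ^ q := by rw [pow_succ, pow_succ]; ring
  have h5 : ((2 : ℕ) ^ q : ℝ) ≤ ((Iavg d ∩ Set.Icc 1 N).ncard : ℝ) := by exact_mod_cast hnc
  push_cast at h5
  calc (1/4 : ℝ) * (N : ℝ) ^ (d / (20 * (6 - d)))
      ≤ (1/4 : ℝ) * (N : ℝ) ^ (d / 30) := by linarith
    _ ≤ (1/4 : ℝ) * (4 * 2 ^ q) := by rw [← h4]; linarith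
    _ = (2 : ℝ) ^ q := by ring
    _ ≤ _ := h5
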